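/- arXiv:2006.09903 — 2 statements merged into one kernel-verified Lean document; each statement's English description precedes it below -/
import Mathlib

section
/- For all j_c > 0, γ > 0, every e ∈ ℝ³ with e ≠ 0, and all v, w ∈ ℝ³, one has |ψ_γ(e) v · w| ≤ 2 j_c γ |v| |w|. -/
open scoped RealInnerProductSpace Topology

/-- Moreau-Yosida regularization of the max-function `x ↦ max{1, x}`. -/
noncomputable def maxReg (γ x : ℝ) : ℝ :=
  if 1 / (2 * γ) ≤ x - 1 then x
  else if x - 1 ≤ -(1 / (2 * γ)) then 1
  else 1 + γ / 2 * (x - 1 + 1 / (2 * γ)) ^ 2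

abbrev E3 := EuclideanSpace ℝ (Fin 3)

/-- The regularized dual-variable map `Λ_γ(e) = j_c γ e / max_γ{1, γ|e|}`. -/
noncomputable def Lam (jc γ : ℝ) (e : E3) : E3 :=
  (jc * γ / maxReg γ (γ * ‖e‖)) • e

/-- The coefficient `c_γ(e)` arising in the derivative of `Λ_γ`. -/
noncomputable def cReg (γ : ℝ) (e : E3) : ℝ :=
  if 1 + 1 / (2 * γ) ≤ γ * ‖e‖ then 1
  else if |γ * ‖e‖ - 1| < 1 / (2 * γ) then γ * (γ * ‖e‖ - 1 + 1 / (2 * γ))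
  else 0

/-- The matrix `ψ_γ(e)` applied to a vector `v`, where `(e ⊗ Λ_γ(e)) v = (Λ_γ(e) ⬝ v) e`. -/
noncomputable def psi (jc γ : ℝ) (e v : E3) : E3 :=
  (jc * γ / maxReg γ (γ * ‖e‖)) • v
    - ((γ * cReg γ e / (maxReg γ (γ * ‖e‖) * ‖e‖)) * ⟪Lam jc γ e, v⟫) • e

lemma maxReg_ge_one {γ : ℝ} (hγ : 0 < γ) (x : ℝ) : 1 ≤ maxReg γ x := by
  unfold maxReg
  split_ifs with h1 h2
  · have : 0 < 1 / (2 * γ) := by positivity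
    linarith
  · exact le_rfl
  · nlinarith [sq_nonneg (x - 1 + 1 / (2 * γ))]

lemma maxReg_ge_self {γ : ℝ} (hγ : 0 < γ) (x : ℝ) : x ≤ maxReg γ x := by
  unfold maxReg
  split_ifs with h1 h2
  · exact le_rfl
  · have : 0 < 1 / (2 * γ) := by positivity
    linarith
  · have h3 : γ * (1 / (2 * γ)) = 1 / 2 := by field_simp
    nlinarith [sq_nonneg (γ * (x - 1 + 1 / (2 * γ)) - 1), mul_pos hγ hγ, h3]

lemma cReg_mem {γ : ℝ} (hγ : 0 < γ) (e : E3) : 0 ≤ cReg γ e ∧ cReg γ e ≤ 1 := by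
  unfold cReg
  split_ifs with h1 h2
  · exact ⟨zero_le_one, le_refl 1⟩
  · rw [abs_lt] at h2
    have h3 : γ * (1 / (2 * γ)) = 1 / 2 := by field_simp
    constructor
    · nlinarith [mul_lt_mul_of_pos_left h2.1 hγ]
    · nlinarith [mul_lt_mul_of_pos_left h2.2 hγ]
  · exact ⟨le_refl 0, zero_le_one⟩

/-- Bilinear-form bound for `ψ_γ(e)`: `|ψ_γ(e) v ⬝ w| ≤ 2 j_c γ ‖v‖ ‖w‖` for e ≠ 0. -/
theorem psi_bound (jc γ : ℝ) (hjc : 0 < jc) (hγ : 0 < γ) (e : E3) (he : e ≠ 0)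
    (v w : E3) : |⟪psi jc γ e v, w⟫| ≤ 2 * jc * γ * ‖v‖ * ‖w‖ := by
  set M := maxReg γ (γ * ‖e‖) with hM
  have he0 : (0:ℝ) < ‖e‖ := norm_pos_iff.mpr he
  have hM1 : 1 ≤ M := maxReg_ge_one hγ _
  have hMx : γ * ‖e‖ ≤ M := maxReg_ge_self hγ _
  have hMpos : 0 < M := lt_of_lt_of_le one_pos hM1
  obtain ⟨hc0, hc1⟩ := cReg_mem hγ e
  set c := cReg γ e
  have hexp : ⟪psi jc γ e v, w⟫ =
      (jc * γ / M) * ⟪v, w⟫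
        - (γ * c / (M * ‖e‖)) * ((jc * γ / M) * ⟪e, v⟫) * ⟪e, w⟫ := by
    have hLam : ⟪Lam jc γ e, v⟫ = (jc * γ / M) * ⟪e, v⟫ := by
      rw [Lam, real_inner_smul_left]
    rw [psi, inner_sub_left, real_inner_smul_left, real_inner_smul_left, hLam]
  rw [hexp]
  have hvw := abs_real_inner_le_norm v w
  have hev := abs_real_inner_le_norm e v
  have hew := abs_real_inner_le_norm e w
  have h1 : |(jc * γ / M) * ⟪v, w⟫| ≤ jc * γ * ‖v‖ * ‖w‖ := by
    rw [abs_mul]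
    have hA : |jc * γ / M| = jc * γ / M := abs_of_pos (by positivity)
    rw [hA]
    have : jc * γ / M ≤ jc * γ := by
      rw [div_le_iff₀ hMpos]; nlinarith [mul_pos hjc hγ]
    calc jc * γ / M * |⟪v, w⟫| ≤ jc * γ * (‖v‖ * ‖w‖) := by
          apply mul_le_mul this hvw (abs_nonneg _) (by positivity)
      _ = jc * γ * ‖v‖ * ‖w‖ := by ring
  have h2 : |(γ * c / (M * ‖e‖)) * ((jc * γ / M) * ⟪e, v⟫) * ⟪e, w⟫|
      ≤ jc * γ * ‖v‖ * ‖w‖ := by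
    rw [abs_mul, abs_mul, abs_mul]
    have hB : |γ * c / (M * ‖e‖)| = γ * c / (M * ‖e‖) := abs_of_nonneg (by positivity)
    have hC : |jc * γ / M| = jc * γ / M := abs_of_pos (by positivity)
    rw [hB, hC]
    have key : γ * c / (M * ‖e‖) * (jc * γ / M * |⟪e, v⟫|) * |⟪e, w⟫|
        ≤ γ * c / (M * ‖e‖) * (jc * γ / M * (‖e‖ * ‖v‖)) * (‖e‖ * ‖w‖) := by
      gcongr
    refine key.trans ?_
    have heq : γ * c / (M * ‖e‖) * (jc * γ / M * (‖e‖ * ‖v‖)) * (‖e‖ * ‖w‖)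
        = (γ * c * ‖e‖ / (M * M)) * (jc * γ * ‖v‖ * ‖w‖) := by
      field_simp
    rw [heq]
    have hfrac : γ * c * ‖e‖ / (M * M) ≤ 1 := by
      rw [div_le_one (by positivity)]
      nlinarith
    nlinarith [mul_nonneg (mul_nonneg (mul_nonneg hjc.le hγ.le) (norm_nonneg v)) (norm_nonneg w)]
  calc |(jc * γ / M) * ⟪v, w⟫ - (γ * c / (M * ‖e‖)) * ((jc * γ / M) * ⟪e, v⟫) * ⟪e, w⟫|
      ≤ |(jc * γ / M) * ⟪v, w⟫| + |(γ * c / (M * ‖e‖)) * ((jc * γ / M) * ⟪e, v⟫) * ⟪e, w⟫| :=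
        abs_sub _ _
    _ ≤ jc * γ * ‖v‖ * ‖w‖ + jc * γ * ‖v‖ * ‖w‖ := add_le_add h1 h2
    _ = 2 * jc * γ * ‖v‖ * ‖w‖ := by ring
end

section
/- For all j_c > 0, γ > 0, every e ∈ ℝ³ with e ≠ 0, and every p ∈ ℝ³, one has the γ-independent bound |e| · |ψ_γ(e) p| ≤ 2 j_c |p|. -/
open scoped RealInnerProductSpace Topology

lemma one_le_maxReg (γ x : ℝ) (hγ : 0 < γ) : 1 ≤ maxReg γ x := by
  unfold maxReg
  split_ifs with h1 h2
  · nlinarith [div_pos one_pos (by linarith : (0:ℝ) < 2*γ)]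
  · exact le_rfl
  · nlinarith [mul_nonneg (by linarith : (0:ℝ) ≤ γ/2) (sq_nonneg (x - 1 + 1 / (2*γ)))]

lemma le_maxReg (γ x : ℝ) (hγ : 0 < γ) : x ≤ maxReg γ x := by
  unfold maxReg
  have h2γ : (0:ℝ) < 2*γ := by linarith
  split_ifs with h1 h2
  · exact le_rfl
  · nlinarith [div_pos one_pos h2γ]
  · have hne : (2*γ) ≠ 0 := ne_of_gt h2γ
    have : γ / 2 * (x - 1 + 1 / (2*γ))^2 - (x - 1) = γ/2 * (x - 1 - 1/(2*γ))^2 := by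
      field_simp
      ring
    nlinarith [this, mul_nonneg (by linarith : (0:ℝ) ≤ γ/2) (sq_nonneg (x - 1 - 1/(2*γ)))]

lemma cReg_nonneg (γ : ℝ) (e : E3) (hγ : 0 < γ) : 0 ≤ cReg γ e := by
  unfold cReg
  split_ifs with h1 h2
  · norm_num
  · rw [abs_lt] at h2
    nlinarith [h2.1]
  · exact le_rfl

lemma cReg_le_one (γ : ℝ) (e : E3) (hγ : 0 < γ) : cReg γ e ≤ 1 := by
  unfold cReg
  have h2γ : (0:ℝ) < 2*γ := by linarith
  have hne : (2*γ) ≠ 0 := ne_of_gt h2γ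
  split_ifs with h1 h2
  · exact le_rfl
  · rw [abs_lt] at h2
    have h2' := h2.2
    have : γ * (γ * ‖e‖ - 1) < γ * (1/(2*γ)) := by
      exact mul_lt_mul_of_pos_left h2' hγ
    have hh : γ * (1/(2*γ)) = 1/2 := by field_simp
    nlinarith
  · norm_num

/-- γ-independent bound: `‖e‖ ⬝ ‖ψ_γ(e) p‖ ≤ 2 j_c ‖p‖` for e ≠ 0. -/
theorem psi_gamma_independent_bound (jc γ : ℝ) (hjc : 0 < jc) (hγ : 0 < γ) (e : E3)
    (he : e ≠ 0) (p : E3) : ‖e‖ * ‖psi jc γ e p‖ ≤ 2 * jc * ‖p‖ := by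
  have hr : 0 < ‖e‖ := norm_pos_iff.mpr he
  set M := maxReg γ (γ * ‖e‖) with hMdef
  have hM1 : 1 ≤ M := one_le_maxReg γ _ hγ
  have hMx : γ * ‖e‖ ≤ M := le_maxReg γ _ hγ
  have hM0 : 0 < M := lt_of_lt_of_le one_pos hM1
  set c := cReg γ e with hcdef
  have hc0 : 0 ≤ c := cReg_nonneg γ e hγ
  have hc1 : c ≤ 1 := cReg_le_one γ e hγ
  set A := jc * γ / M with hAdef
  have hA0 : 0 < A := by positivity
  have hA : A * ‖e‖ ≤ jc := by
    rw [hAdef, div_mul_eq_mul_div, div_le_iff₀ hM0]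
    nlinarith
  have hB : γ * c * ‖e‖ / M ≤ 1 := by
    rw [div_le_one hM0]
    nlinarith
  have hinner : |⟪Lam jc γ e, p⟫| ≤ A * (‖e‖ * ‖p‖) := by
    rw [Lam, real_inner_smul_left, abs_mul, abs_of_pos hA0]
    exact mul_le_mul_of_nonneg_left (abs_real_inner_le_norm e p) hA0.le
  have hψ : ‖psi jc γ e p‖ ≤ A * ‖p‖ + (γ * c / M) * (A * (‖e‖ * ‖p‖)) := by
    rw [psi]
    refine (norm_sub_le _ _).trans ?_
    rw [norm_smul, norm_smul, Real.norm_eq_abs, Real.norm_eq_abs, abs_mul, abs_of_pos hA0]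
    have hd : |γ * c / (M * ‖e‖)| = γ * c / (M * ‖e‖) := by
      rw [abs_of_nonneg]; positivity
    rw [hd]
    have key : γ * c / (M * ‖e‖) * |⟪Lam jc γ e, p⟫| * ‖e‖
        ≤ γ * c / M * (A * (‖e‖ * ‖p‖)) := by
      have hq : γ * c / (M * ‖e‖) * |⟪Lam jc γ e, p⟫| * ‖e‖
          = γ * c / M * |⟪Lam jc γ e, p⟫| := by
        field_simp
      rw [hq]
      exact mul_le_mul_of_nonneg_left hinner (by positivity)
    linarith
  have hexp : ‖e‖ * (A * ‖p‖ + (γ * c / M) * (A * (‖e‖ * ‖p‖)))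
      = (A * ‖e‖) * ‖p‖ + (γ * c * ‖e‖ / M) * ((A * ‖e‖) * ‖p‖) := by
    ring
  have hmain : ‖e‖ * ‖psi jc γ e p‖ ≤ (A * ‖e‖) * ‖p‖ + (γ * c * ‖e‖ / M) * ((A * ‖e‖) * ‖p‖) := by
    rw [← hexp]
    exact mul_le_mul_of_nonneg_left hψ hr.le
  have hAe : (A * ‖e‖) * ‖p‖ ≤ jc * ‖p‖ :=
    mul_le_mul_of_nonneg_right hA (norm_nonneg p)
  have hsecond : (γ * c * ‖e‖ / M) * ((A * ‖e‖) * ‖p‖) ≤ jc * ‖p‖ := by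
    have h0 : 0 ≤ (A * ‖e‖) * ‖p‖ := by positivity
    calc (γ * c * ‖e‖ / M) * ((A * ‖e‖) * ‖p‖) ≤ 1 * ((A * ‖e‖) * ‖p‖) :=
          mul_le_mul_of_nonneg_right hB h0
      _ = (A * ‖e‖) * ‖p‖ := one_mul _
      _ ≤ jc * ‖p‖ := hAe
  linarith
end
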